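/- Let p(x) = ½N(x; μ, τ²I) + ½N(x; −μ, τ²I) be an equal-weight two-component Gaussian mixture on ℝ^d and let Y = X + N with N ~ N(0, σ²I) independent of X. Then ∇² log p_Y(y) = (σ²+τ²)^{−1}[−I + (2μμ^⊤/(σ²+τ²))·(1 + cosh(2μ^⊤y/(σ²+τ²)))^{−1}], and this matrix is maximized (in Loewner order over y) at y = 0. -/

import Mathlib

open MeasureTheory Real

noncomputable section

def sqDist {d : ℕ} (x y : Fin d → ℝ) : ℝ := ∑ i, (x i - y i) ^ 2

/-- Density of the isotropic Gaussian `N(x, s² I)` evaluated at `y`. -/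
def gKer (d : ℕ) (s : ℝ) (x y : Fin d → ℝ) : ℝ :=
  (2 * π * s ^ 2) ^ (-(d : ℝ) / 2) * Real.exp (-sqDist x y / (2 * s ^ 2))

def hess' {d : ℕ} (g : (Fin d → ℝ) → ℝ) (y : Fin d → ℝ) : Matrix (Fin d) (Fin d) ℝ :=
  Matrix.of fun i j => fderiv ℝ (fun z => fderiv ℝ g z (Pi.single j 1)) y (Pi.single i 1)

/-- The equal-weight two-component Gaussian mixture `½N(μ, τ²I) + ½N(−μ, τ²I)`. -/
def mixPDF {d : ℕ} (μ : Fin d → ℝ) (τ : ℝ) (x : Fin d → ℝ) : ℝ :=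
  (1 / 2) * gKer d τ μ x + (1 / 2) * gKer d τ (-μ) x


def g1 (s a b : ℝ) : ℝ := (2*π*s^2) ^ (-(1:ℝ)/2) * Real.exp (-(a-b)^2/(2*s^2))

lemma g1conv (σ τ : ℝ) (hσ : 0 < σ) (hτ : 0 < τ) (a z : ℝ) :
    ∫ x : ℝ, ((2*π*τ^2) ^ (-(1:ℝ)/2) * Real.exp (-(a-x)^2/(2*τ^2))) *
      ((2*π*σ^2) ^ (-(1:ℝ)/2) * Real.exp (-(x-z)^2/(2*σ^2)))
      = (2*π*(σ^2+τ^2)) ^ (-(1:ℝ)/2) * Real.exp (-(a-z)^2/(2*(σ^2+τ^2))) := by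
  have hs2 : (0:ℝ) < σ^2 + τ^2 := by positivity
  set s2 := σ^2 + τ^2 with hs2def
  set b := s2 / (2*σ^2*τ^2) with hbdef
  have hb : 0 < b := by positivity
  set m := (σ^2*a + τ^2*z)/s2 with hmdef
  set K := (2*π*τ^2) ^ (-(1:ℝ)/2) * (2*π*σ^2) ^ (-(1:ℝ)/2) * Real.exp (-(a-z)^2/(2*s2)) with hKdef
  have key : ∀ x : ℝ, ((2*π*τ^2) ^ (-(1:ℝ)/2) * Real.exp (-(a-x)^2/(2*τ^2))) *
      ((2*π*σ^2) ^ (-(1:ℝ)/2) * Real.exp (-(x-z)^2/(2*σ^2)))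
      = K * Real.exp (-b * (x-m)^2) := by
    intro x
    have hexp : -(a-x)^2/(2*τ^2) + -(x-z)^2/(2*σ^2) = -(a-z)^2/(2*s2) + -b*(x-m)^2 := by
      rw [hbdef, hmdef, hs2def]
      field_simp
      ring
    rw [mul_mul_mul_comm, ← Real.exp_add, hexp, Real.exp_add, hKdef]
    ring
  simp_rw [key]
  rw [MeasureTheory.integral_const_mul]
  have : ∫ x : ℝ, Real.exp (-b * (x-m)^2) = Real.sqrt (π / b) := by
    rw [show (fun x : ℝ => Real.exp (-b * (x-m)^2)) = (fun x : ℝ => Real.exp (-b * x^2)) ∘ (fun x => x - m) from rfl]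
    rw [Function.comp_def, integral_sub_right_eq_self (fun x : ℝ => Real.exp (-b * x^2)) m]
    exact integral_gaussian b
  rw [this, hKdef]
  have hrp : ∀ c : ℝ, 0 < c → c ^ (-(1:ℝ)/2) = (Real.sqrt c)⁻¹ := by
    intro c hc
    rw [neg_div, Real.rpow_neg hc.le, Real.sqrt_eq_rpow]
  rw [hrp _ (by positivity), hrp _ (by positivity), hrp _ (by positivity)]
  rw [mul_comm _ (Real.exp _), mul_comm _ (Real.exp _), mul_assoc, mul_assoc]
  congr 1
  rw [← Real.sqrt_inv, ← Real.sqrt_inv, ← Real.sqrt_inv, ← Real.sqrt_mul (by positivity),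
    ← Real.sqrt_mul (by positivity)]
  congr 1
  rw [hbdef, hs2def]
  field_simp

lemma gKer_eq_prod {d : ℕ} {s : ℝ} (hs : 0 < s) (x y : Fin d → ℝ) :
    gKer d s x y = ∏ i, g1 s (x i) (y i) := by
  have hc : (0:ℝ) < 2 * π * s ^ 2 := by positivity
  rw [gKer, sqDist]
  rw [show (-(d:ℝ)/2) = (-(1:ℝ)/2) * (d:ℕ) by push_cast; ring]
  rw [Real.rpow_mul hc.le, Real.rpow_natCast]
  have hdiv : (-∑ i : Fin d, (x i - y i)^2)/(2*s^2) = ∑ i, -(x i - y i)^2/(2*s^2) := by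
    rw [← Finset.sum_div]
    congr 1
    exact (Finset.sum_neg_distrib _).symm
  rw [hdiv, Real.exp_sum, show (((2*π*s^2) ^ (-(1:ℝ)/2)) ^ d : ℝ)
      = ∏ _i : Fin d, (2*π*s^2) ^ (-(1:ℝ)/2) by simp, ← Finset.prod_mul_distrib]
  simp [g1]

lemma g1_integrable {s : ℝ} (hs : 0 < s) (a : ℝ) : Integrable (fun x => g1 s a x) := by
  unfold g1
  apply Integrable.const_mul
  have : ∀ x : ℝ, -(a-x)^2/(2*s^2) = -(1/(2*s^2)) * (x-a)^2 := by intro x; ring_nf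
  simp_rw [this]
  exact (integrable_exp_neg_mul_sq (by positivity)).comp_sub_right a

lemma g1_symm (s a b : ℝ) : g1 s a b = g1 s b a := by
  unfold g1; rw [show (a-b)^2 = (b-a)^2 by ring]

lemma g1_cont (s a : ℝ) : Continuous (fun x => g1 s a x) := by
  unfold g1
  fun_prop

lemma g1_bdd (s a : ℝ) (hs : 0 < s) : ∀ x, ‖g1 s a x‖ ≤ (2*π*s^2) ^ (-(1:ℝ)/2) := by
  intro x
  have h1 : (0:ℝ) < (2*π*s^2) ^ (-(1:ℝ)/2) := Real.rpow_pos_of_pos (by positivity) _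
  rw [Real.norm_eq_abs, g1, abs_mul, abs_of_pos h1, abs_of_pos (Real.exp_pos _)]
  nth_rewrite 2 [← mul_one ((2*π*s^2) ^ (-(1:ℝ)/2))]
  apply mul_le_mul_of_nonneg_left _ h1.le
  rw [Real.exp_le_one_iff]
  have : (0:ℝ) < 2*s^2 := by positivity
  exact div_nonpos_of_nonpos_of_nonneg (neg_nonpos.mpr (by positivity)) this.le

lemma gKer_mul_integrable {d : ℕ} {σ τ : ℝ} (hσ : 0 < σ) (hτ : 0 < τ) (a z : Fin d → ℝ) :
    Integrable (fun x : Fin d → ℝ => gKer d τ a x * gKer d σ x z) := by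
  have : (fun x : Fin d → ℝ => gKer d τ a x * gKer d σ x z)
      = fun x => ∏ i, (g1 τ (a i) (x i) * g1 σ (x i) (z i)) := by
    funext x
    rw [gKer_eq_prod hτ, gKer_eq_prod hσ, ← Finset.prod_mul_distrib]
  rw [this]
  apply Integrable.fintype_prod (f := fun i v => g1 τ (a i) v * g1 σ v (z i))
  intro i
  have hint : Integrable (fun v => g1 σ v (z i)) := by
    simp_rw [g1_symm σ _ (z i)]
    exact g1_integrable hσ (z i)
  exact hint.bdd_mul (g1_cont τ (a i)).aestronglyMeasurable (Filter.Eventually.of_forall (g1_bdd τ (a i) hτ))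

lemma gKer_conv {d : ℕ} {σ τ : ℝ} (hσ : 0 < σ) (hτ : 0 < τ) (a z : Fin d → ℝ) :
    ∫ x : Fin d → ℝ, gKer d τ a x * gKer d σ x z
      = gKer d (Real.sqrt (σ^2+τ^2)) a z := by
  have hs2 : (0:ℝ) < σ^2+τ^2 := by positivity
  have hsq : Real.sqrt (σ^2+τ^2) ^ 2 = σ^2+τ^2 := Real.sq_sqrt hs2.le
  have h1 : ∀ x : Fin d → ℝ, gKer d τ a x * gKer d σ x z
      = ∏ i, (g1 τ (a i) (x i) * g1 σ (x i) (z i)) := by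
    intro x
    rw [gKer_eq_prod hτ, gKer_eq_prod hσ, ← Finset.prod_mul_distrib]
  simp_rw [h1]
  rw [MeasureTheory.integral_fintype_prod_volume_eq_prod (f := fun i v => g1 τ (a i) v * g1 σ v (z i)),
    gKer_eq_prod (Real.sqrt_pos.2 hs2)]
  apply Finset.prod_congr rfl
  intro i _
  have := g1conv σ τ hσ hτ (a i) (z i)
  unfold g1
  rw [hsq]
  exact this

lemma mix_conv {d : ℕ} {σ τ : ℝ} (hσ : 0 < σ) (hτ : 0 < τ) (μ z : Fin d → ℝ) :
    ∫ x, mixPDF μ τ x * gKer d σ x z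
      = (1/2) * gKer d (Real.sqrt (σ^2+τ^2)) μ z
        + (1/2) * gKer d (Real.sqrt (σ^2+τ^2)) (-μ) z := by
  simp_rw [mixPDF, add_mul, mul_assoc]
  rw [MeasureTheory.integral_add ((gKer_mul_integrable hσ hτ μ z).const_mul _)
    ((gKer_mul_integrable hσ hτ (-μ) z).const_mul _),
    MeasureTheory.integral_const_mul, MeasureTheory.integral_const_mul,
    gKer_conv hσ hτ μ z, gKer_conv hσ hτ (-μ) z]

lemma mix_closed {d : ℕ} {σ τ : ℝ} (hσ : 0 < σ) (hτ : 0 < τ) (μ z : Fin d → ℝ) :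
    ∫ x, mixPDF μ τ x * gKer d σ x z
      = (2*π*(σ^2+τ^2)) ^ (-(d:ℝ)/2)
        * Real.exp (-((∑ i, z i^2) + ∑ i, μ i^2)/(2*(σ^2+τ^2)))
        * Real.cosh ((∑ i, μ i * z i)/(σ^2+τ^2)) := by
  have hs2 : (0:ℝ) < σ^2+τ^2 := by positivity
  have hsq : Real.sqrt (σ^2+τ^2) ^ 2 = σ^2+τ^2 := Real.sq_sqrt hs2.le
  rw [mix_conv hσ hτ μ z]
  unfold gKer
  rw [hsq]
  have e1 : sqDist μ z = (∑ i, μ i^2) - 2*(∑ i, μ i * z i) + ∑ i, z i^2 := by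
    unfold sqDist
    rw [Finset.mul_sum, ← Finset.sum_sub_distrib, ← Finset.sum_add_distrib]
    exact Finset.sum_congr rfl fun i _ => by ring
  have e2 : sqDist (-μ) z = (∑ i, μ i^2) + 2*(∑ i, μ i * z i) + ∑ i, z i^2 := by
    unfold sqDist
    rw [Finset.mul_sum, ← Finset.sum_add_distrib, ← Finset.sum_add_distrib]
    exact Finset.sum_congr rfl fun i _ => by simp only [Pi.neg_apply]; ring
  rw [e1, e2, Real.cosh_eq]
  rw [show -((∑ i, μ i^2) - 2*(∑ i, μ i * z i) + ∑ i, z i^2)/(2*(σ^2+τ^2))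
      = -((∑ i, z i^2) + ∑ i, μ i^2)/(2*(σ^2+τ^2)) + (∑ i, μ i * z i)/(σ^2+τ^2) by
    field_simp; ring]
  rw [show -((∑ i, μ i^2) + 2*(∑ i, μ i * z i) + ∑ i, z i^2)/(2*(σ^2+τ^2))
      = -((∑ i, z i^2) + ∑ i, μ i^2)/(2*(σ^2+τ^2)) + -((∑ i, μ i * z i)/(σ^2+τ^2)) by
    field_simp; ring]
  rw [Real.exp_add, Real.exp_add]
  ring


lemma hasDerivAt_tanh (t : ℝ) : HasDerivAt Real.tanh (1/Real.cosh t^2) t := by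
  have h := (Real.hasDerivAt_sinh t).div (Real.hasDerivAt_cosh t) (Real.cosh_pos t).ne'
  have : Real.tanh = fun x => Real.sinh x / Real.cosh x := funext fun x => Real.tanh_eq_sinh_div_cosh x
  rw [this]
  refine h.congr_deriv ?_
  rw [← Real.cosh_sq_sub_sinh_sq t]
  ring

def Lmap {d : ℕ} (μ : Fin d → ℝ) : (Fin d → ℝ) →L[ℝ] ℝ :=
  ∑ i, μ i • ContinuousLinearMap.proj i

lemma Lmap_apply {d : ℕ} (μ v : Fin d → ℝ) : Lmap μ v = ∑ i, μ i * v i := by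
  simp [Lmap]

lemma Lmap_single {d : ℕ} (μ : Fin d → ℝ) (j : Fin d) : Lmap μ (Pi.single j 1) = μ j := by
  rw [Lmap_apply]
  simp [Pi.single_apply]

lemma hasFDerivAt_sumsq {d : ℕ} (z : Fin d → ℝ) :
    HasFDerivAt (fun z : Fin d → ℝ => ∑ i, z i ^ 2) (Lmap (fun i => 2 * z i)) z := by
  have h : ∀ i : Fin d, HasFDerivAt (fun z : Fin d → ℝ => z i ^ 2)
      ((2 * z i) • (ContinuousLinearMap.proj i : (Fin d → ℝ) →L[ℝ] ℝ)) z := by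
    intro i
    have h1 : HasDerivAt (fun t : ℝ => t ^ 2) (2 * z i) (z i) := by
      simpa using hasDerivAt_pow 2 (z i)
    have h2 : HasFDerivAt (fun z : Fin d → ℝ => z i)
        (ContinuousLinearMap.proj i : (Fin d → ℝ) →L[ℝ] ℝ) z :=
      (ContinuousLinearMap.proj i : (Fin d → ℝ) →L[ℝ] ℝ).hasFDerivAt
    exact h1.comp_hasFDerivAt z h2
  exact HasFDerivAt.fun_sum (fun i _ => h i)

variable {d : ℕ}

lemma hasFDerivAt_F (C Q s2 : ℝ) (hs2 : 0 < s2) (μ z : Fin d → ℝ) :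
    HasFDerivAt (fun z : Fin d → ℝ => C - ((∑ i, z i ^ 2) + Q)/(2*s2)
        + Real.log (Real.cosh ((∑ i, μ i * z i)/s2)))
      ((-(2*s2)⁻¹) • Lmap (fun i => 2 * z i)
        + (Real.tanh ((∑ i, μ i * z i)/s2) * s2⁻¹) • Lmap μ) z := by
  have hu : HasFDerivAt (fun z : Fin d → ℝ => (∑ i, μ i * z i)/s2) (s2⁻¹ • Lmap μ) z := by
    have h1 : HasFDerivAt (fun z : Fin d → ℝ => ∑ i, μ i * z i) (Lmap μ) z := by
      have := (Lmap μ).hasFDerivAt (x := z)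
      simp_rw [show ⇑(Lmap μ) = fun z : Fin d → ℝ => ∑ i, μ i * z i from funext (Lmap_apply μ)] at this
      exact this
    have h2 := h1.const_mul s2⁻¹
    simp_rw [div_eq_inv_mul]
    exact h2
  have hlog : HasDerivAt (fun t : ℝ => Real.log (Real.cosh t))
      (Real.tanh ((∑ i, μ i * z i)/s2)) ((∑ i, μ i * z i)/s2) := by
    have := (Real.hasDerivAt_cosh ((∑ i, μ i * z i)/s2)).log (Real.cosh_pos _).ne'
    rwa [← Real.tanh_eq_sinh_div_cosh] at this
  have hcomp := hlog.comp_hasFDerivAt z hu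
  have hsq := ((hasFDerivAt_sumsq z).add_const Q).const_mul (2*s2)⁻¹
  have hfirst := hsq.const_sub C
  have hsum := hfirst.add hcomp
  simp only [Function.comp_def, inv_mul_eq_div] at hsum
  have hD : ((-(2*s2)⁻¹) • Lmap (fun i => 2 * z i)
        + (Real.tanh ((∑ i, μ i * z i)/s2) * s2⁻¹) • Lmap μ)
      = (-((2*s2)⁻¹ • Lmap (fun i => 2 * z i)))
        + Real.tanh ((∑ i, μ i * z i)/s2) • s2⁻¹ • Lmap μ := by
    refine ContinuousLinearMap.ext fun v => ?_
    simp only [ContinuousLinearMap.add_apply, ContinuousLinearMap.smul_apply,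
      ContinuousLinearMap.neg_apply, smul_eq_mul]
    ring
  rw [hD]
  exact hsum

lemma fderiv_F_single (C Q s2 : ℝ) (hs2 : 0 < s2) (μ : Fin d → ℝ) (j : Fin d) :
    (fun z => fderiv ℝ (fun z : Fin d → ℝ => C - ((∑ i, z i ^ 2) + Q)/(2*s2)
        + Real.log (Real.cosh ((∑ i, μ i * z i)/s2))) z (Pi.single j 1))
      = fun z => -(s2⁻¹) * z j
          + (μ j * s2⁻¹) * Real.tanh ((∑ i, μ i * z i)/s2) := by
  funext z
  rw [(hasFDerivAt_F C Q s2 hs2 μ z).fderiv]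
  simp only [ContinuousLinearMap.add_apply, ContinuousLinearMap.smul_apply, smul_eq_mul,
    Lmap_single]
  ring

lemma hasFDerivAt_G (s2 : ℝ) (hs2 : 0 < s2) (μ y : Fin d → ℝ) (j : Fin d) :
    HasFDerivAt (fun z : Fin d → ℝ => -(s2⁻¹) * z j
        + (μ j * s2⁻¹) * Real.tanh ((∑ i, μ i * z i)/s2))
      ((-(s2⁻¹)) • (ContinuousLinearMap.proj j : (Fin d → ℝ) →L[ℝ] ℝ)
        + ((μ j * s2⁻¹) * (1 / Real.cosh ((∑ i, μ i * y i)/s2) ^ 2) * s2⁻¹) • Lmap μ) y := by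
  have hu : HasFDerivAt (fun z : Fin d → ℝ => (∑ i, μ i * z i)/s2) (s2⁻¹ • Lmap μ) y := by
    have h1 : HasFDerivAt (fun z : Fin d → ℝ => ∑ i, μ i * z i) (Lmap μ) y := by
      have := (Lmap μ).hasFDerivAt (x := y)
      simp_rw [show ⇑(Lmap μ) = fun z : Fin d → ℝ => ∑ i, μ i * z i from funext (Lmap_apply μ)] at this
      exact this
    have h2 := h1.const_mul s2⁻¹
    simp_rw [div_eq_inv_mul]
    exact h2
  have htanh := (hasDerivAt_tanh ((∑ i, μ i * y i)/s2)).comp_hasFDerivAt y hu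
  have h2 := htanh.const_mul (μ j * s2⁻¹)
  have hproj : HasFDerivAt (fun z : Fin d → ℝ => -(s2⁻¹) * z j)
      ((-(s2⁻¹)) • (ContinuousLinearMap.proj j : (Fin d → ℝ) →L[ℝ] ℝ)) y := by
    have h3 : HasFDerivAt (fun z : Fin d → ℝ => z j)
        (ContinuousLinearMap.proj j : (Fin d → ℝ) →L[ℝ] ℝ) y :=
      (ContinuousLinearMap.proj j : (Fin d → ℝ) →L[ℝ] ℝ).hasFDerivAt
    exact h3.const_mul (-(s2⁻¹))
  have hsum := hproj.add h2
  simp only [Function.comp_def] at hsum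
  have hD : ((-(s2⁻¹)) • (ContinuousLinearMap.proj j : (Fin d → ℝ) →L[ℝ] ℝ)
        + ((μ j * s2⁻¹) * (1 / Real.cosh ((∑ i, μ i * y i)/s2) ^ 2) * s2⁻¹) • Lmap μ)
      = ((-(s2⁻¹)) • (ContinuousLinearMap.proj j : (Fin d → ℝ) →L[ℝ] ℝ)
        + (μ j * s2⁻¹) • (1 / Real.cosh ((∑ i, μ i * y i)/s2) ^ 2) • s2⁻¹ • Lmap μ) := by
    refine ContinuousLinearMap.ext fun v => ?_
    simp only [ContinuousLinearMap.add_apply, ContinuousLinearMap.smul_apply, smul_eq_mul]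
    ring
  rw [hD]
  exact hsum

lemma hessF (C Q s2 : ℝ) (hs2 : 0 < s2) (μ y : Fin d → ℝ) :
    hess' (fun z : Fin d → ℝ => C - ((∑ i, z i ^ 2) + Q)/(2*s2)
        + Real.log (Real.cosh ((∑ i, μ i * z i)/s2))) y
      = s2⁻¹ • (-(1 : Matrix (Fin d) (Fin d) ℝ)
          + ((2 / s2) * (1 + Real.cosh (2 * (∑ i, μ i * y i) / s2))⁻¹)
            • Matrix.vecMulVec μ μ) := by
  have hch : Real.cosh ((∑ i, μ i * y i)/s2) ≠ 0 := (Real.cosh_pos _).ne'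
  have hcosh2 : 1 + Real.cosh (2 * (∑ i, μ i * y i) / s2)
      = 2 * Real.cosh ((∑ i, μ i * y i)/s2) ^ 2 := by
    rw [show 2 * (∑ i, μ i * y i) / s2 = 2 * ((∑ i, μ i * y i)/s2) by ring,
      Real.cosh_two_mul]
    have := Real.cosh_sq_sub_sinh_sq ((∑ i, μ i * y i)/s2)
    linarith
  ext i j
  rw [hess']
  simp only [Matrix.of_apply]
  rw [fderiv_F_single C Q s2 hs2 μ j, (hasFDerivAt_G s2 hs2 μ y j).fderiv]
  simp only [ContinuousLinearMap.add_apply, ContinuousLinearMap.smul_apply, smul_eq_mul,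
    Lmap_single, ContinuousLinearMap.proj_apply, Matrix.smul_apply, Matrix.add_apply,
    Matrix.neg_apply, Matrix.one_apply, Matrix.vecMulVec_apply, Pi.single_apply]
  rw [hcosh2]
  by_cases h : i = j
  · subst h
    simp only [if_pos rfl]
    field_simp
  · rw [if_neg h, if_neg fun hh => h hh.symm]
    field_simp

lemma psd_smul_vecMulVec {d : ℕ} (t : ℝ) (ht : 0 ≤ t) (μ : Fin d → ℝ) :
    (t • Matrix.vecMulVec μ μ).PosSemidef := by
  rw [Matrix.posSemidef_iff_dotProduct_mulVec]
  constructor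
  · show Matrix.conjTranspose (t • Matrix.vecMulVec μ μ) = t • Matrix.vecMulVec μ μ
    ext i j
    simp only [Matrix.conjTranspose_apply, Matrix.smul_apply, Matrix.vecMulVec_apply,
      smul_eq_mul, star_trivial]
    ring
  · intro x
    have hx : star x = x := funext fun i => star_trivial _
    rw [hx]
    have hcalc : dotProduct x ((t • Matrix.vecMulVec μ μ).mulVec x)
        = t * (∑ i, μ i * x i) ^ 2 := by
      have h1 : dotProduct x ((t • Matrix.vecMulVec μ μ).mulVec x)
          = ∑ i, x i * ∑ j, (t * (μ i * μ j)) * x j := by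
        simp [dotProduct, Matrix.mulVec, Matrix.smul_apply, Matrix.vecMulVec_apply]
      rw [h1]
      have h2 : ∀ i, x i * ∑ j, (t * (μ i * μ j)) * x j
          = (t * (μ i * x i)) * ∑ j, μ j * x j := by
        intro i
        rw [Finset.mul_sum, Finset.mul_sum]
        exact Finset.sum_congr rfl fun j _ => by ring
      simp_rw [h2]
      rw [← Finset.sum_mul, ← Finset.mul_sum]
      ring
    rw [hcalc]
    positivity

lemma log_closed {d : ℕ} {σ τ : ℝ} (hσ : 0 < σ) (hτ : 0 < τ) (μ : Fin d → ℝ) :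
    (fun z : Fin d → ℝ => Real.log (∫ x, mixPDF μ τ x * gKer d σ x z))
      = fun z : Fin d → ℝ => Real.log ((2*π*(σ^2+τ^2)) ^ (-(d:ℝ)/2))
          - ((∑ i, z i ^ 2) + ∑ i, μ i ^ 2)/(2*(σ^2+τ^2))
          + Real.log (Real.cosh ((∑ i, μ i * z i)/(σ^2+τ^2))) := by
  funext z
  have hc : (0:ℝ) < (2*π*(σ^2+τ^2)) ^ (-(d:ℝ)/2) :=
    Real.rpow_pos_of_pos (by positivity) _
  rw [mix_closed hσ hτ μ z, Real.log_mul (by positivity) (Real.cosh_pos _).ne',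
    Real.log_mul hc.ne' (Real.exp_pos _).ne', Real.log_exp]
  ring

/-- For the smoothed two-component mixture,
`∇² log p_Y(y) = (σ²+τ²)⁻¹[−I + (2μμᵀ/(σ²+τ²))(1 + cosh(2μᵀy/(σ²+τ²)))⁻¹]`,
and in Loewner order this Hessian is maximized over `y` at `y = 0`. -/
theorem stmt15 (d : ℕ) (σ τ : ℝ) (hσ : 0 < σ) (hτ : 0 < τ) (μ : Fin d → ℝ) :
    (∀ y : Fin d → ℝ,
      hess' (fun z => Real.log (∫ x, mixPDF μ τ x * gKer d σ x z)) y
        = (σ ^ 2 + τ ^ 2)⁻¹ •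
            (-(1 : Matrix (Fin d) (Fin d) ℝ)
              + ((2 / (σ ^ 2 + τ ^ 2))
                  * (1 + Real.cosh (2 * (∑ i, μ i * y i) / (σ ^ 2 + τ ^ 2)))⁻¹)
                • Matrix.vecMulVec μ μ))
    ∧ ∀ y : Fin d → ℝ,
      (hess' (fun z => Real.log (∫ x, mixPDF μ τ x * gKer d σ x z)) 0
        - hess' (fun z => Real.log (∫ x, mixPDF μ τ x * gKer d σ x z)) y).PosSemidef := by
  have hs2 : (0:ℝ) < σ^2 + τ^2 := by positivity
  have hpart1 : ∀ y : Fin d → ℝ,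
      hess' (fun z => Real.log (∫ x, mixPDF μ τ x * gKer d σ x z)) y
        = (σ ^ 2 + τ ^ 2)⁻¹ •
            (-(1 : Matrix (Fin d) (Fin d) ℝ)
              + ((2 / (σ ^ 2 + τ ^ 2))
                  * (1 + Real.cosh (2 * (∑ i, μ i * y i) / (σ ^ 2 + τ ^ 2)))⁻¹)
                • Matrix.vecMulVec μ μ) := by
    intro y
    rw [log_closed hσ hτ μ]
    exact hessF (Real.log ((2*π*(σ^2+τ^2)) ^ (-(d:ℝ)/2))) (∑ i, μ i ^ 2) (σ^2+τ^2) hs2 μ y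
  refine ⟨hpart1, fun y => ?_⟩
  rw [hpart1 0, hpart1 y]
  have h0 : (∑ i, μ i * (0 : Fin d → ℝ) i) = 0 := by simp
  rw [h0]
  set u := ∑ i, μ i * y i with hu
  set s2 := σ^2 + τ^2 with hs2d
  have hdiff : (s2⁻¹ • (-(1 : Matrix (Fin d) (Fin d) ℝ)
        + ((2 / s2) * (1 + Real.cosh (2 * 0 / s2))⁻¹) • Matrix.vecMulVec μ μ))
      - (s2⁻¹ • (-(1 : Matrix (Fin d) (Fin d) ℝ)
        + ((2 / s2) * (1 + Real.cosh (2 * u / s2))⁻¹) • Matrix.vecMulVec μ μ))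
      = (s2⁻¹ * ((2 / s2) * ((1 + Real.cosh (2 * 0 / s2))⁻¹
          - (1 + Real.cosh (2 * u / s2))⁻¹))) • Matrix.vecMulVec μ μ := by
    ext i j
    simp only [Matrix.sub_apply, Matrix.smul_apply, Matrix.add_apply, Matrix.neg_apply,
      Matrix.one_apply, Matrix.vecMulVec_apply, smul_eq_mul]
    ring
  rw [hdiff]
  apply psd_smul_vecMulVec
  have hc1 : Real.cosh (2 * 0 / s2) = 1 := by norm_num
  have hc2 : (2:ℝ) ≤ 1 + Real.cosh (2 * u / s2) := by
    linarith [Real.one_le_cosh (2 * u / s2)]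
  have hinv : (1 + Real.cosh (2 * u / s2))⁻¹ ≤ (1 + Real.cosh (2 * 0 / s2))⁻¹ := by
    rw [hc1, show ((1:ℝ)+1)⁻¹ = 2⁻¹ by norm_num]
    exact inv_anti₀ (by norm_num) hc2
  have : (0:ℝ) ≤ (1 + Real.cosh (2 * 0 / s2))⁻¹ - (1 + Real.cosh (2 * u / s2))⁻¹ :=
    sub_nonneg.2 hinv
  positivity

end
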